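/- arXiv:2511.14753 — 2 statements merged into one kernel-verified Lean document; each statement's English description precedes it below -/
import Mathlib

section
/- The delta-network approximation error does not accumulate: defining ŷ_t = ŷ_{t−1} + W·Δx_t with Δx_t the thresholded delta (Δx_t = x_t − x̂_{t−1} if |x_t − x̂_{t−1}| > Θ componentwise, else 0) and ŷ_0 = 0, x̂_0 = 0, one has ŷ_t = W·x̂_t for all t, and hence ‖ŷ_t − W·x_t‖_∞ ≤ ‖W‖_∞ · Θ for all t, where ‖W‖_∞ is the maximum absolute row sum of W. -/
/-- The delta-network approximation error does not accumulate:
`ŷ_t = W·x̂_t` for all `t`, and hence `‖ŷ_t − W·x_t‖_∞ ≤ ‖W‖_∞·Θ`,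
where `‖W‖_∞` is the maximum absolute row sum of `W`. -/
theorem stmt_4 (m n : ℕ) (hm : 0 < m) (W : Matrix (Fin m) (Fin n) ℝ)
    (Θ : ℝ) (hΘ : 0 ≤ Θ)
    (x xhat Δx : ℕ → Fin n → ℝ) (yhat : ℕ → Fin m → ℝ)
    (hx0 : x 0 = 0) (hxhat0 : xhat 0 = 0) (hyhat0 : yhat 0 = 0)
    (hxhat : ∀ t : ℕ, ∀ i : Fin n,
      xhat (t + 1) i =
        if Θ < |x (t + 1) i - xhat t i| then x (t + 1) i else xhat t i)
    (hΔx : ∀ t : ℕ, ∀ i : Fin n,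
      Δx (t + 1) i =
        if Θ < |x (t + 1) i - xhat t i| then x (t + 1) i - xhat t i else 0)
    (hyhat : ∀ t : ℕ, yhat (t + 1) = W.mulVec (Δx (t + 1)) + yhat t) :
    (∀ t : ℕ, yhat t = W.mulVec (xhat t)) ∧
    (∀ t : ℕ, ∀ i : Fin m,
      |yhat t i - W.mulVec (x t) i|
        ≤ (Finset.univ.sup' ⟨⟨0, hm⟩, Finset.mem_univ _⟩
            (fun i' : Fin m => ∑ j : Fin n, |W i' j|)) * Θ) := by
  have hΔ : ∀ t : ℕ, Δx (t + 1) = xhat (t + 1) - xhat t := by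
    intro t
    funext i
    rw [hΔx t i]
    simp only [Pi.sub_apply, hxhat t i]
    split <;> simp
  have h1 : ∀ t : ℕ, yhat t = W.mulVec (xhat t) := by
    intro t
    induction t with
    | zero => simp [hyhat0, hxhat0, Matrix.mulVec_zero]
    | succ t ih =>
      rw [hyhat t, ih, hΔ t, Matrix.mulVec_sub]
      ring
  have hclose : ∀ t : ℕ, ∀ j : Fin n, |xhat t j - x t j| ≤ Θ := by
    intro t j
    cases t with
    | zero => simp [hx0, hxhat0, hΘ]
    | succ t =>
      rw [hxhat t j]
      split
      · simpa using hΘ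
      · next h => rw [abs_sub_comm]; exact le_of_not_gt h
  refine ⟨h1, fun t i => ?_⟩
  rw [h1 t]
  have : W.mulVec (xhat t) i - W.mulVec (x t) i = ∑ j, W i j * (xhat t j - x t j) := by
    simp [Matrix.mulVec, dotProduct, Finset.sum_sub_distrib, mul_sub]
  rw [this]
  calc |∑ j, W i j * (xhat t j - x t j)| ≤ ∑ j, |W i j * (xhat t j - x t j)| :=
        Finset.abs_sum_le_sum_abs _ _
    _ ≤ ∑ j, |W i j| * Θ := by
        refine Finset.sum_le_sum fun j _ => ?_
        rw [abs_mul]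
        exact mul_le_mul_of_nonneg_left (hclose t j) (abs_nonneg _)
    _ = (∑ j, |W i j|) * Θ := by rw [Finset.sum_mul]
    _ ≤ _ := by
        exact mul_le_mul_of_nonneg_right
          (Finset.le_sup' (fun i' : Fin m => ∑ j : Fin n, |W i' j|) (Finset.mem_univ i)) hΘ
end

section
/- Weighted Tchebycheff scalarization can reach every Pareto optimal point: if x* ∈ X is Pareto optimal and z_i* < f_i(x) for all x ∈ X and all i, then choosing weights w_i = 1/(f_i(x*) − z_i*), the point x* is a minimizer of max_i w_i(f_i(x) − z_i*) over X, with optimal value 1. -/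
/-- Weighted Tchebycheff scalarization can reach every Pareto optimal point:
with weights `w_i = 1/(f_i(x*) − z_i*)`, the Pareto optimal point `x*` is a
minimizer of `max_i w_i(f_i(x) − z_i*)` over `X`, with optimal value `1`. -/
theorem stmt_11 {X : Type*} (k : ℕ) (hk : 0 < k)
    (f : Fin k → X → ℝ) (z : Fin k → ℝ)
    (hz : ∀ (x : X) (i : Fin k), z i < f i x)
    (xstar : X)
    (hpareto : ¬ ∃ x : X, (∀ i : Fin k, f i x ≤ f i xstar)
        ∧ ∃ j : Fin k, f j x < f j xstar) :
    (Finset.univ.sup' ⟨⟨0, hk⟩, Finset.mem_univ _⟩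
        (fun i : Fin k => (1 / (f i xstar - z i)) * (f i xstar - z i)) = 1)
    ∧ ∀ x : X,
        Finset.univ.sup' ⟨⟨0, hk⟩, Finset.mem_univ _⟩
            (fun i : Fin k => (1 / (f i xstar - z i)) * (f i xstar - z i))
          ≤ Finset.univ.sup' ⟨⟨0, hk⟩, Finset.mem_univ _⟩
              (fun i : Fin k => (1 / (f i xstar - z i)) * (f i x - z i)) := by
  have hd : ∀ i : Fin k, 0 < f i xstar - z i := fun i => sub_pos.mpr (hz xstar i)
  have hone : ∀ i : Fin k, (1 / (f i xstar - z i)) * (f i xstar - z i) = 1 := by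
    intro i
    field_simp
    exact div_self (hd i).ne'
  have hsup : Finset.univ.sup' ⟨⟨0, hk⟩, Finset.mem_univ _⟩
      (fun i : Fin k => (1 / (f i xstar - z i)) * (f i xstar - z i)) = 1 := by
    apply le_antisymm
    · exact Finset.sup'_le _ _ fun i _ => le_of_eq (hone i)
    · exact le_trans (le_of_eq (hone ⟨0, hk⟩).symm)
        (Finset.le_sup' (fun i : Fin k => (1 / (f i xstar - z i)) * (f i xstar - z i)) (Finset.mem_univ _))
  refine ⟨hsup, fun x => ?_⟩
  rw [hsup]
  by_contra h
  push_neg at h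
  have hlt : ∀ i : Fin k, (1 / (f i xstar - z i)) * (f i x - z i) < 1 := by
    intro i
    exact lt_of_le_of_lt (Finset.le_sup' (fun i : Fin k => (1 / (f i xstar - z i)) * (f i x - z i)) (Finset.mem_univ i)) h
  have hflt : ∀ i : Fin k, f i x < f i xstar := by
    intro i
    have := hlt i
    rw [div_mul_eq_mul_div, one_mul, div_lt_one (hd i)] at this
    linarith
  exact hpareto ⟨x, fun i => (hflt i).le, ⟨0, hk⟩, hflt _⟩
end
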